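/- Let h = p + εq be a dual quaternion such that t − h is a monic linear motion polynomial (i.e., q is pure and pq̄ + qp̄ = 0) and such that p is not real (the vector part of p is nonzero). Then there exist a pure quaternion x₀ and a nonzero pure quaternion d such that for every real number t₀ and every real s, the action of the dual quaternion (t₀ − p) − εq fixes the point x₀ + s·d; i.e., t − h parametrizes a rotation about a fixed axis in ℝ³. -/

import Mathlib

noncomputable section
open Polynomial

/-- The real quaternions ℍ. -/
abbrev Quat := Quaternion ℝ

/-- The dual quaternions 𝔻ℍ = ℍ ⊕ εℍ, realized as dual numbers over ℍ.
An element is a pair `(p, q)` representing `p + εq`. -/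
abbrev DQ := DualNumber Quat

/-- Conjugation of a dual quaternion `p + εq ↦ p̄ + εq̄`,
conjugating each quaternion part. -/
def dconj (h : DQ) : DQ := (star h.fst, star h.snd)

/-- The canonical ring homomorphism ℝ → 𝔻ℍ. -/
def realToDQ : ℝ →+* DQ := (TrivSqZeroExt.inlHom Quat Quat).comp (algebraMap ℝ Quat)

/-- Coefficientwise conjugate of a polynomial over 𝔻ℍ. -/
def pconj (C : DQ[X]) : DQ[X] := C.sum fun n a => Polynomial.C (dconj a) * X ^ n

/-- `C ∈ 𝔻ℍ[t]` is a motion polynomial if `C C̄ ∈ ℝ[t] \ {0}` and the leading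
coefficient of `C` is invertible. -/
def IsMotionPoly (C : DQ[X]) : Prop :=
  (∃ R : ℝ[X], R ≠ 0 ∧ C * pconj C = R.map realToDQ) ∧ IsUnit C.leadingCoeff

/-- The action of a dual quaternion `p + εq` (with `p ≠ 0` and satisfying the Study
condition) on a pure quaternion `x`:  `x ↦ (p x p̄ + p q̄ − q p̄)/N(p)`. -/
def act (p q x : Quat) : Quat :=
  (p * x * star p + p * star q - q * star p) * (p * star p)⁻¹

/-- A quaternion from its components, typed as `Quat`. -/
def qmk (a b c d : ℝ) : Quat := ⟨a, b, c, d⟩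

@[simp] lemma qmk_re (a b c d : ℝ) : (qmk a b c d).re = a := rfl
@[simp] lemma qmk_imI (a b c d : ℝ) : (qmk a b c d).imI = b := rfl
@[simp] lemma qmk_imJ (a b c d : ℝ) : (qmk a b c d).imJ = c := rfl
@[simp] lemma qmk_imK (a b c d : ℝ) : (qmk a b c d).imK = d := rfl

set_option maxHeartbeats 1000000 in
/-- If `t − h`, `h = p + εq`, is a monic linear motion polynomial
(`q` pure, Study condition) and `p` is not real, then there is a fixed axis
`{x₀ + s·d : s ∈ ℝ}` of pure quaternions (with `d ≠ 0`) each of whose points is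
fixed by the action of `(t₀ − p) − εq` for every real parameter value `t₀`;
i.e. `t − h` parametrizes a rotation about a fixed axis in ℝ³. -/
theorem stmt6 (p q : Quat) (hq : q + star q = 0) (hs : p * star q + q * star p = 0)
    (hp : p.im ≠ 0) :
    ∃ x₀ d : Quat, x₀.re = 0 ∧ d.re = 0 ∧ d ≠ 0 ∧
      ∀ t₀ s : ℝ, act ((t₀ : Quat) - p) (-q) (x₀ + s • d) = x₀ + s • d := by
  obtain ⟨a, b, c, e, rfl⟩ : ∃ a b c e : ℝ, p = qmk a b c e := ⟨p.re, p.imI, p.imJ, p.imK, rfl⟩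
  obtain ⟨f, g, k, l, rfl⟩ : ∃ f g k l : ℝ, q = qmk f g k l := ⟨q.re, q.imI, q.imJ, q.imK, rfl⟩
  open Quaternion in simp [Quaternion.ext_iff] at hq hs hp
  subst hq
  have horth : b * g + c * k + e * l = 0 := by linarith [hs.1]
  have hnpos : 0 < b ^ 2 + c ^ 2 + e ^ 2 := by
    by_contra h
    push_neg at h
    have hb : b = 0 := by nlinarith
    have hc : c = 0 := by nlinarith
    have he : e = 0 := by nlinarith
    exact hp hb hc he
  have hn0 : b ^ 2 + c ^ 2 + e ^ 2 ≠ 0 := ne_of_gt hnpos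
  refine ⟨qmk 0 ((k*e - l*c)/(b ^ 2 + c ^ 2 + e ^ 2)) ((l*b - g*e)/(b ^ 2 + c ^ 2 + e ^ 2))
      ((g*c - k*b)/(b ^ 2 + c ^ 2 + e ^ 2)), qmk 0 b c e, rfl, rfl, ?_, ?_⟩
  · open Quaternion in simp [Quaternion.ext_iff]
    intro hb hc
    exact hp hb hc
  intro t₀ s
  have hP : ((t₀ : Quat) - qmk a b c e) * star ((t₀ : Quat) - qmk a b c e) ≠ 0 := by
    apply mul_ne_zero
    · open Quaternion in simp [Quaternion.ext_iff]
      intro _ hb hc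
      exact hp hb hc
    · open Quaternion in simp [Quaternion.ext_iff]
      intro _ hb hc
      exact hp hb hc
  rw [act, mul_inv_eq_iff_eq_mul₀ hP]
  rw [Quaternion.ext_iff]
  refine ⟨?_, ?_, ?_, ?_⟩
  all_goals simp [Quaternion.ext_iff, Quaternion.re_mul, Quaternion.imI_mul, Quaternion.imJ_mul,
    Quaternion.imK_mul]
  all_goals field_simp
  · ring
  · linear_combination (2*b*t₀ - 2*a*b) * horth
  · linear_combination (2*c*t₀ - 2*a*c) * horth
  · linear_combination (2*e*t₀ - 2*a*e) * horth
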